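/- Closed form for scale-linearized domain-size pooling: for σ, σ_s > 0, x, y, b ∈ ℝ² with x ≠ 0, and rotation matrix R_α, the convolution in s of the function s ↦ e^s k_σ(y - (1+s) R_α x - b) with the 1D Gaussian k_{σ_s} equals k_σ(y - R_α x - b) · k_{σ/‖x‖}(1 + ((R_α x)ᵀ(b-y) - σ²)/‖x‖²)^{-1} · k_{√(σ_s² + σ²/‖x‖²)}(s + 1 + ((R_α x)ᵀ(b-y) - σ²)/‖x‖²). -/

import Mathlib

open MeasureTheory RealInnerProductSpace

/-- d-dimensional isotropic Gaussian kernel. -/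
noncomputable def gauss (d : ℕ) (σ : ℝ) (v : EuclideanSpace ℝ (Fin d)) : ℝ :=
  (2 * Real.pi * σ ^ 2) ^ (-(d : ℝ) / 2) * Real.exp (-‖v‖ ^ 2 / (2 * σ ^ 2))

/-- 1D Gaussian kernel. -/
noncomputable def gauss1 (σ t : ℝ) : ℝ :=
  (2 * Real.pi * σ ^ 2) ^ (-(1 : ℝ) / 2) * Real.exp (-t ^ 2 / (2 * σ ^ 2))

lemma gauss_integral_shift (β μ : ℝ) (hβ : 0 < β) :
    ∫ t : ℝ, Real.exp (-β * (t - μ) ^ 2) = Real.sqrt (Real.pi / β) := by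
  have h : (∫ t : ℝ, Real.exp (-β * (t - μ) ^ 2)) = ∫ t : ℝ, Real.exp (-β * t ^ 2) :=
    MeasureTheory.integral_sub_right_eq_self (μ := volume)
      (fun t : ℝ => Real.exp (-β * t ^ 2)) μ
  rw [h]; exact integral_gaussian β
lemma norm_toEucl {n : Type*} [DecidableEq n] [Fintype n]
    (R : Matrix n n ℝ) (hR : R ∈ Matrix.orthogonalGroup n ℝ) (x : EuclideanSpace ℝ n) :
    ‖Matrix.toEuclideanLin R x‖ = ‖x‖ := by
  have h1 : star R * R = 1 := Matrix.mem_unitaryGroup_iff'.mp hR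
  have key : Matrix.toEuclideanLin (star R) (Matrix.toEuclideanLin R x) = x := by
    rw [Matrix.toEuclideanLin_apply, Matrix.toEuclideanLin_apply]
    simp [Matrix.mulVec_mulVec, h1]
  have h2 : ⟪Matrix.toEuclideanLin R x, Matrix.toEuclideanLin R x⟫ = ⟪x, x⟫ := by
    have := (LinearMap.adjoint_inner_left (𝕜 := ℝ) (Matrix.toEuclideanLin R)
      x (Matrix.toEuclideanLin R x)).symm
    rwa [← Matrix.toEuclideanLin_conjTranspose_eq_adjoint, ← Matrix.star_eq_conjTranspose,
      key] at this
  rw [real_inner_self_eq_norm_sq, real_inner_self_eq_norm_sq] at h2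
  calc ‖Matrix.toEuclideanLin R x‖ = Real.sqrt (‖Matrix.toEuclideanLin R x‖ ^ 2) :=
        (Real.sqrt_sq (norm_nonneg _)).symm
    _ = Real.sqrt (‖x‖ ^ 2) := by rw [h2]
    _ = ‖x‖ := Real.sqrt_sq (norm_nonneg _)

lemma final_alg (σ σs n p A s : ℝ) (hσ : 0 < σ) (hσs : 0 < σs) (hn : 0 < n) :
    ((2*Real.pi*σ^2)^(-(2:ℝ)/2) * (2*Real.pi*σs^2)^(-(1:ℝ)/2)
      * Real.exp (s - (A + 2*(1+s)*p + (1+s)^2*n^2)/(2*σ^2)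
        + ((1+s)*n^2+p-σ^2)^2*σs^2/(2*σ^2*(n^2*σs^2+σ^2))))
      * Real.sqrt (Real.pi / ((n^2*σs^2+σ^2)/(2*σ^2*σs^2)))
    = ((2*Real.pi*σ^2)^(-(2:ℝ)/2) * Real.exp (-(A + 2*p + n^2)/(2*σ^2)))
      * ((2*Real.pi*(σ/n)^2)^(-(1:ℝ)/2)
          * Real.exp (-(1+(p-σ^2)/n^2)^2/(2*(σ/n)^2)))⁻¹
      * ((2*Real.pi*(Real.sqrt (σs^2+σ^2/n^2))^2)^(-(1:ℝ)/2)
          * Real.exp (-(s+1+(p-σ^2)/n^2)^2/(2*(Real.sqrt (σs^2+σ^2/n^2))^2))) := by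
  have hpi := Real.pi_pos
  have hV : (0:ℝ) < σs^2 + σ^2/n^2 := by positivity
  have hS : (0:ℝ) < n^2*σs^2 + σ^2 := by positivity
  rw [Real.sq_sqrt hV.le]
  have hrp : ∀ a : ℝ, 0 < a → a ^ (-(1:ℝ)/2) = (Real.sqrt a)⁻¹ := by
    intro a ha
    rw [show (-(1:ℝ)/2) = -(1/2 : ℝ) by norm_num, Real.rpow_neg ha.le, ← Real.sqrt_eq_rpow]
  have hrp2 : (2*Real.pi*σ^2 : ℝ) ^ (-(2:ℝ)/2) = (2*Real.pi*σ^2)⁻¹ := by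
    rw [show (-(2:ℝ)/2) = ((-1 : ℤ) : ℝ) by norm_num, Real.rpow_intCast, zpow_neg_one]
  rw [hrp2, hrp _ (by positivity), hrp _ (by positivity), hrp _ (by positivity)]
  have hsq : Real.sqrt (Real.pi / ((n^2*σs^2+σ^2)/(2*σ^2*σs^2)))
      * Real.sqrt (2*Real.pi*(σs^2+σ^2/n^2))
      = Real.sqrt (2*Real.pi*(σ/n)^2) * Real.sqrt (2*Real.pi*σs^2) := by
    rw [← Real.sqrt_mul (by positivity), ← Real.sqrt_mul (by positivity)]
    congr 1
    field_simp
  have hexp : Real.exp (s - (A + 2*(1+s)*p + (1+s)^2*n^2)/(2*σ^2)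
        + ((1+s)*n^2+p-σ^2)^2*σs^2/(2*σ^2*(n^2*σs^2+σ^2)))
      * Real.exp (-(1+(p-σ^2)/n^2)^2/(2*(σ/n)^2))
      = Real.exp (-(A + 2*p + n^2)/(2*σ^2))
        * Real.exp (-(s+1+(p-σ^2)/n^2)^2/(2*(σs^2+σ^2/n^2))) := by
    rw [← Real.exp_add, ← Real.exp_add]
    congr 1
    field_simp
    ring
  have hh : (Real.sqrt (Real.pi / ((n^2*σs^2+σ^2)/(2*σ^2*σs^2)))
        * Real.sqrt (2*Real.pi*(σs^2+σ^2/n^2)))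
      * (Real.exp (s - (A + 2*(1+s)*p + (1+s)^2*n^2)/(2*σ^2)
          + ((1+s)*n^2+p-σ^2)^2*σs^2/(2*σ^2*(n^2*σs^2+σ^2)))
        * Real.exp (-(1+(p-σ^2)/n^2)^2/(2*(σ/n)^2)))
      = (Real.sqrt (2*Real.pi*(σ/n)^2) * Real.sqrt (2*Real.pi*σs^2))
        * (Real.exp (-(A + 2*p + n^2)/(2*σ^2))
          * Real.exp (-(s+1+(p-σ^2)/n^2)^2/(2*(σs^2+σ^2/n^2)))) := by
    rw [hsq, hexp]
  have n1 : Real.sqrt (2*Real.pi*σs^2) ≠ 0 := by positivity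
  have n2 : Real.sqrt (2*Real.pi*(σ/n)^2) ≠ 0 := by positivity
  have n3 : Real.sqrt (2*Real.pi*(σs^2+σ^2/n^2)) ≠ 0 := by positivity
  have n4 : (2*Real.pi*σ^2 : ℝ) ≠ 0 := by positivity
  have n5 : Real.exp (-(1+(p-σ^2)/n^2)^2/(2*(σ/n)^2)) ≠ 0 := Real.exp_ne_zero _
  set Q := Real.sqrt (Real.pi / ((n^2*σs^2+σ^2)/(2*σ^2*σs^2))) with hQ
  set Ss := Real.sqrt (2*Real.pi*σs^2) with hSs
  set Sn := Real.sqrt (2*Real.pi*(σ/n)^2) with hSn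
  set SV := Real.sqrt (2*Real.pi*(σs^2+σ^2/n^2)) with hSV
  set E0e := Real.exp (s - (A + 2*(1+s)*p + (1+s)^2*n^2)/(2*σ^2)
        + ((1+s)*n^2+p-σ^2)^2*σs^2/(2*σ^2*(n^2*σs^2+σ^2))) with hE0e
  set X1e := Real.exp (-(A + 2*p + n^2)/(2*σ^2)) with hX1e
  set X2e := Real.exp (-(1+(p-σ^2)/n^2)^2/(2*(σ/n)^2)) with hX2e
  set X3e := Real.exp (-(s+1+(p-σ^2)/n^2)^2/(2*(σs^2+σ^2/n^2))) with hX3e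
  set C := (2*Real.pi*σ^2 : ℝ) with hC
  field_simp
  linear_combination hh

lemma exp_quad (σ σs n p A s t : ℝ) (hσ : σ ≠ 0) (hσs : σs ≠ 0) (hn : n ≠ 0)
    (hS : n^2*σs^2 + σ^2 ≠ 0) :
    (s - t) + -(A + 2*(1+(s-t))*p + (1+(s-t))^2*n^2)/(2*σ^2) + -t^2/(2*σs^2)
    = (s - (A + 2*(1+s)*p + (1+s)^2*n^2)/(2*σ^2)
        + ((1+s)*n^2+p-σ^2)^2*σs^2/(2*σ^2*(n^2*σs^2+σ^2)))
      + -((n^2*σs^2+σ^2)/(2*σ^2*σs^2))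
          * (t - ((1+s)*n^2+p-σ^2)*σs^2/(n^2*σs^2+σ^2))^2 := by
  field_simp
  ring

theorem dsp_linearized_closed_form (σ σs : ℝ) (hσ : 0 < σ) (hσs : 0 < σs)
    (x y b : EuclideanSpace ℝ (Fin 2)) (hx : x ≠ 0)
    (R : Matrix (Fin 2) (Fin 2) ℝ)
    (hR : R ∈ Matrix.orthogonalGroup (Fin 2) ℝ) (hdet : R.det = 1) (s : ℝ) :
    (∫ t : ℝ,
        (Real.exp (s - t)
          * gauss 2 σ (y - (1 + (s - t)) • (Matrix.toEuclideanLin R x) - b))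
        * gauss1 σs t)
      = gauss 2 σ (y - Matrix.toEuclideanLin R x - b)
        * (gauss1 (σ / ‖x‖)
            (1 + (⟪Matrix.toEuclideanLin R x, b - y⟫ - σ ^ 2) / ‖x‖ ^ 2))⁻¹
        * gauss1 (Real.sqrt (σs ^ 2 + σ ^ 2 / ‖x‖ ^ 2))
            (s + 1 + (⟪Matrix.toEuclideanLin R x, b - y⟫ - σ ^ 2) / ‖x‖ ^ 2) := by
  have hn : (0:ℝ) < ‖x‖ := norm_pos_iff.mpr hx
  set u := Matrix.toEuclideanLin R x with hu
  have hun : ‖u‖ = ‖x‖ := norm_toEucl R hR x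
  set p := (⟪u, b - y⟫ : ℝ) with hp
  have hS : (0:ℝ) < ‖x‖^2*σs^2 + σ^2 := by positivity
  have hβ : (0:ℝ) < (‖x‖^2*σs^2+σ^2)/(2*σ^2*σs^2) := by positivity
  have hip : ∀ q : ℝ, ‖y - q • u - b‖ ^ 2 = ‖y - b‖^2 + 2*q*p + q^2*‖x‖^2 := by
    intro q
    have h0 : y - q • u - b = (y - b) - q • u := by
      rw [sub_right_comm]
    have h1 : (⟪y - b, u⟫ : ℝ) = -p := by
      rw [hp, real_inner_comm, show y - b = -(b - y) from (neg_sub b y).symm,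
        inner_neg_right]
    rw [h0, norm_sub_sq_real, real_inner_smul_right, h1, norm_smul, Real.norm_eq_abs, mul_pow, sq_abs,
      hun]
    ring
  have hip1 : ‖y - u - b‖ ^ 2 = ‖y - b‖^2 + 2*p + ‖x‖^2 := by
    have := hip 1
    rw [one_smul] at this
    rw [this]; ring
  have hpt : ∀ t : ℝ,
      (Real.exp (s - t) * gauss 2 σ (y - (1 + (s - t)) • u - b)) * gauss1 σs t
      = ((2*Real.pi*σ^2)^(-(2:ℝ)/2) * (2*Real.pi*σs^2)^(-(1:ℝ)/2)
          * Real.exp (s - (‖y - b‖^2 + 2*(1+s)*p + (1+s)^2*‖x‖^2)/(2*σ^2)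
            + ((1+s)*‖x‖^2+p-σ^2)^2*σs^2/(2*σ^2*(‖x‖^2*σs^2+σ^2))))
        * Real.exp (-((‖x‖^2*σs^2+σ^2)/(2*σ^2*σs^2))
            * (t - ((1+s)*‖x‖^2+p-σ^2)*σs^2/(‖x‖^2*σs^2+σ^2))^2) := by
    intro t
    simp only [gauss, gauss1, Nat.cast_ofNat, hip (1 + (s - t))]
    have hexp : Real.exp (s - t)
        * Real.exp (-(‖y - b‖^2 + 2*(1+(s-t))*p + (1+(s-t))^2*‖x‖^2)/(2*σ^2))
        * Real.exp (-t^2/(2*σs^2))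
        = Real.exp (s - (‖y - b‖^2 + 2*(1+s)*p + (1+s)^2*‖x‖^2)/(2*σ^2)
            + ((1+s)*‖x‖^2+p-σ^2)^2*σs^2/(2*σ^2*(‖x‖^2*σs^2+σ^2)))
          * Real.exp (-((‖x‖^2*σs^2+σ^2)/(2*σ^2*σs^2))
            * (t - ((1+s)*‖x‖^2+p-σ^2)*σs^2/(‖x‖^2*σs^2+σ^2))^2) := by
      rw [← Real.exp_add, ← Real.exp_add, ← Real.exp_add]
      exact congrArg Real.exp
        (exp_quad σ σs ‖x‖ p (‖y - b‖^2) s t hσ.ne' hσs.ne' hn.ne' hS.ne')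
    linear_combination
      ((2*Real.pi*σ^2)^(-(2:ℝ)/2) * (2*Real.pi*σs^2)^(-(1:ℝ)/2)) * hexp
  calc (∫ t : ℝ, (Real.exp (s - t) * gauss 2 σ (y - (1 + (s - t)) • u - b))
          * gauss1 σs t)
      = ∫ t : ℝ, ((2*Real.pi*σ^2)^(-(2:ℝ)/2) * (2*Real.pi*σs^2)^(-(1:ℝ)/2)
          * Real.exp (s - (‖y - b‖^2 + 2*(1+s)*p + (1+s)^2*‖x‖^2)/(2*σ^2)
            + ((1+s)*‖x‖^2+p-σ^2)^2*σs^2/(2*σ^2*(‖x‖^2*σs^2+σ^2))))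
        * Real.exp (-((‖x‖^2*σs^2+σ^2)/(2*σ^2*σs^2))
            * (t - ((1+s)*‖x‖^2+p-σ^2)*σs^2/(‖x‖^2*σs^2+σ^2))^2) := by
        simp only [hpt]
    _ = ((2*Real.pi*σ^2)^(-(2:ℝ)/2) * (2*Real.pi*σs^2)^(-(1:ℝ)/2)
          * Real.exp (s - (‖y - b‖^2 + 2*(1+s)*p + (1+s)^2*‖x‖^2)/(2*σ^2)
            + ((1+s)*‖x‖^2+p-σ^2)^2*σs^2/(2*σ^2*(‖x‖^2*σs^2+σ^2))))
        * ∫ t : ℝ, Real.exp (-((‖x‖^2*σs^2+σ^2)/(2*σ^2*σs^2))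
            * (t - ((1+s)*‖x‖^2+p-σ^2)*σs^2/(‖x‖^2*σs^2+σ^2))^2) :=
        MeasureTheory.integral_const_mul _ _
    _ = ((2*Real.pi*σ^2)^(-(2:ℝ)/2) * (2*Real.pi*σs^2)^(-(1:ℝ)/2)
          * Real.exp (s - (‖y - b‖^2 + 2*(1+s)*p + (1+s)^2*‖x‖^2)/(2*σ^2)
            + ((1+s)*‖x‖^2+p-σ^2)^2*σs^2/(2*σ^2*(‖x‖^2*σs^2+σ^2))))
        * Real.sqrt (Real.pi / ((‖x‖^2*σs^2+σ^2)/(2*σ^2*σs^2))) := by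
        rw [gauss_integral_shift _ _ hβ]
    _ = gauss 2 σ (y - u - b)
        * (gauss1 (σ / ‖x‖) (1 + (p - σ ^ 2) / ‖x‖ ^ 2))⁻¹
        * gauss1 (Real.sqrt (σs ^ 2 + σ ^ 2 / ‖x‖ ^ 2))
            (s + 1 + (p - σ ^ 2) / ‖x‖ ^ 2) := by
        simp only [gauss, gauss1, Nat.cast_ofNat, hip1]
        exact final_alg σ σs ‖x‖ p (‖y - b‖^2) s hσ hσs hn
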